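/- Let G be a finite simple tree graph on n ≤ 5 vertices with integer vertex weights w_i ≤ −2, and let M be the associated symmetric matrix (M_{ii} = w_i; M_{ij} = 1 if i, j adjacent, 0 otherwise for i ≠ j). If M is not negative definite, then n = 5, the graph G is a star (one vertex adjacent to each of the other four), and w_i = −2 for every vertex i. -/

import Mathlib

open Matrix Finset

lemma quad_neg {n : ℕ} (G : SimpleGraph (Fin n)) [DecidableRel G.Adj] (w : Fin n → ℤ)
    (d : Fin n → ℝ) (hd : ∀ i, 0 < d i)
    (hdom : ∀ i, (w i : ℝ) * d i + ∑ j, (if G.Adj i j then d j else 0) < 0)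
    (x : Fin n → ℝ) (hx : x ≠ 0) :
    x ⬝ᵥ (Matrix.mulVec
      (fun i j : Fin n => if i = j then (w i : ℝ) else if G.Adj i j then 1 else 0) x) < 0 := by
  classical
  have hQ : x ⬝ᵥ (Matrix.mulVec
      (fun i j : Fin n => if i = j then (w i : ℝ) else if G.Adj i j then 1 else 0) x)
      = ∑ i, ((w i : ℝ) * x i ^ 2 + ∑ j, (if G.Adj i j then x i * x j else 0)) := by
    simp only [dotProduct, Matrix.mulVec]
    refine Finset.sum_congr rfl fun i _ => ?_
    rw [Finset.mul_sum]
    have : ∀ j : Fin n, x i * ((if i = j then (w i:ℝ) else if G.Adj i j then 1 else 0) * x j)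
        = (if j = i then (w i : ℝ) * x i ^ 2 else 0) + (if G.Adj i j then x i * x j else 0) := by
      intro j
      by_cases h : i = j
      · subst h; simp [G.irrefl]; ring
      · simp only [if_neg h, if_neg (Ne.symm h)]
        split_ifs <;> ring
    rw [Finset.sum_congr rfl fun j _ => this j, Finset.sum_add_distrib,
      Finset.sum_ite_eq' univ i (fun _ => (w i : ℝ) * x i ^ 2), if_pos (mem_univ i)]
  rw [hQ]
  -- cross term bound
  have cross : ∑ i, ∑ j, (if G.Adj i j then x i * x j else 0)
      ≤ ∑ i, ∑ j, (if G.Adj i j then (d j / d i) * x i ^ 2 else 0) := by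
    have step1 : ∑ i, ∑ j, (if G.Adj i j then x i * x j else 0)
        ≤ ∑ i, ∑ j, (if G.Adj i j then
            (d j / (2 * d i)) * x i ^ 2 + (d i / (2 * d j)) * x j ^ 2 else 0) := by
      refine Finset.sum_le_sum fun i _ => Finset.sum_le_sum fun j _ => ?_
      split_ifs with h
      · have hdi := hd i
        have hdj := hd j
        have key : (d j / (2 * d i)) * x i ^ 2 + (d i / (2 * d j)) * x j ^ 2 - x i * x j
            = (d j * x i - d i * x j) ^ 2 / (2 * d i * d j) := by
          field_simp
          ring
        nlinarith [div_nonneg (sq_nonneg (d j * x i - d i * x j))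
          (by positivity : (0:ℝ) ≤ 2 * d i * d j), key]
      · exact le_refl 0
    have split2 : ∑ i, ∑ j, (if G.Adj i j then
            (d j / (2 * d i)) * x i ^ 2 + (d i / (2 * d j)) * x j ^ 2 else 0)
        = ∑ i, ∑ j, (if G.Adj i j then (d j / (2 * d i)) * x i ^ 2 else 0)
          + ∑ i, ∑ j, (if G.Adj i j then (d i / (2 * d j)) * x j ^ 2 else 0) := by
      rw [← Finset.sum_add_distrib]
      refine Finset.sum_congr rfl fun i _ => ?_
      rw [← Finset.sum_add_distrib]
      refine Finset.sum_congr rfl fun j _ => ?_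
      split_ifs <;> simp
    have swap : ∑ i, ∑ j, (if G.Adj i j then (d i / (2 * d j)) * x j ^ 2 else 0)
        = ∑ i, ∑ j, (if G.Adj i j then (d j / (2 * d i)) * x i ^ 2 else 0) := by
      rw [Finset.sum_comm]
      refine Finset.sum_congr rfl fun i _ => Finset.sum_congr rfl fun j _ => ?_
      by_cases h : G.Adj i j
      · rw [if_pos ((G.adj_comm i j).mp h), if_pos h]
      · rw [if_neg (fun hc => h ((G.adj_comm j i).mp hc)), if_neg h]
    calc ∑ i, ∑ j, (if G.Adj i j then x i * x j else 0)
        ≤ _ := step1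
      _ = ∑ i, ∑ j, (if G.Adj i j then (d j / (2 * d i)) * x i ^ 2 else 0)
            + ∑ i, ∑ j, (if G.Adj i j then (d j / (2 * d i)) * x i ^ 2 else 0) := by
          rw [split2, swap]
      _ = ∑ i, ∑ j, (if G.Adj i j then (d j / d i) * x i ^ 2 else 0) := by
          rw [← Finset.sum_add_distrib]
          refine Finset.sum_congr rfl fun i _ => ?_
          rw [← Finset.sum_add_distrib]
          refine Finset.sum_congr rfl fun j _ => ?_
          split_ifs
          · field_simp; ring
          · simp
  have hle : ∑ i, ((w i : ℝ) * x i ^ 2 + ∑ j, (if G.Adj i j then x i * x j else 0))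
      ≤ ∑ i, (x i ^ 2 / d i) * ((w i : ℝ) * d i + ∑ j, (if G.Adj i j then d j else 0)) := by
    have expand : ∀ i, (x i ^ 2 / d i) * ((w i : ℝ) * d i + ∑ j, (if G.Adj i j then d j else 0))
        = (w i : ℝ) * x i ^ 2 + ∑ j, (if G.Adj i j then (d j / d i) * x i ^ 2 else 0) := by
      intro i
      have h0 : d i ≠ 0 := ne_of_gt (hd i)
      rw [mul_add]
      congr 1
      · field_simp
      · rw [Finset.mul_sum]
        refine Finset.sum_congr rfl fun j _ => ?_
        split_ifs
        · field_simp
        · simp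
    calc ∑ i, ((w i : ℝ) * x i ^ 2 + ∑ j, (if G.Adj i j then x i * x j else 0))
        ≤ ∑ i, ((w i : ℝ) * x i ^ 2 + ∑ j, (if G.Adj i j then (d j / d i) * x i ^ 2 else 0)) := by
          rw [Finset.sum_add_distrib, Finset.sum_add_distrib]
          linarith [cross]
      _ = _ := (Finset.sum_congr rfl fun i _ => (expand i).symm)
  refine lt_of_le_of_lt hle ?_
  obtain ⟨i0, hi0⟩ : ∃ i, x i ≠ 0 := Function.ne_iff.mp hx
  have hx2 : 0 < x i0 ^ 2 := lt_of_le_of_ne (sq_nonneg _) (Ne.symm (pow_ne_zero 2 hi0))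
  have hterm : ∀ i ∈ (univ : Finset (Fin n)),
      (x i ^ 2 / d i) * ((w i : ℝ) * d i + ∑ j, (if G.Adj i j then d j else 0)) ≤ 0 :=
    fun i _ => mul_nonpos_of_nonneg_of_nonpos
      (div_nonneg (sq_nonneg _) (le_of_lt (hd i))) (le_of_lt (hdom i))
  calc ∑ i, (x i ^ 2 / d i) * ((w i : ℝ) * d i + ∑ j, (if G.Adj i j then d j else 0))
      < ∑ _i : Fin n, (0:ℝ) := by
        refine Finset.sum_lt_sum hterm ⟨i0, mem_univ i0, ?_⟩
        exact mul_neg_of_pos_of_neg (div_pos hx2 (hd i0)) (hdom i0)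
    _ = 0 := by simp

open Matrix Finset

def tf (a s : ℕ) : ℤ :=
  if a = 1 ∧ s = 3 then 13
  else if a = 2 ∧ s = 2 then 15
  else if a = 2 ∧ s = 3 then 15
  else if a = 2 ∧ s = 4 then 17
  else if a = 3 ∧ s = 3 then 20
  else if a = 3 ∧ s = 4 then 23
  else 10

lemma tf_pos (a s : ℕ) : 0 < tf a s := by unfold tf; split_ifs <;> norm_num

def degB {n : ℕ} (b : Fin n → Fin n → Bool) (i : Fin n) : ℕ := ∑ j, if b i j then 1 else 0
def sdegB {n : ℕ} (b : Fin n → Fin n → Bool) (i : Fin n) : ℕ := ∑ j, if b i j then degB b j else 0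
def ddB {n : ℕ} (b : Fin n → Fin n → Bool) (i : Fin n) : ℤ := tf (degB b i) (sdegB b i)
def degsumB {n : ℕ} (b : Fin n → Fin n → Bool) : ℕ := ∑ i, degB b i

abbrev domB {n : ℕ} (b : Fin n → Fin n → Bool) : Prop :=
  ∀ i, -2 * ddB b i + ∑ j, (if b i j then ddB b j else 0) < 0

def reachB {n : ℕ} (b : Fin n → Fin n → Bool) : ℕ → Fin n → Fin n → Bool
  | 0, i, j => i == j
  | (k+1), i, j => reachB b k i j || decide (∃ m, b i m = true ∧ reachB b k m j = true)

lemma ddB_pos {n : ℕ} (b : Fin n → Fin n → Bool) (i : Fin n) : 0 < ddB b i := tf_pos _ _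

lemma walk_reach {n : ℕ} {G : SimpleGraph (Fin n)} [DecidableRel G.Adj]
    {bb : Fin n → Fin n → Bool} (hbb : ∀ i j, bb i j = true ↔ G.Adj i j) :
    ∀ (k : ℕ) {i j : Fin n} (p : G.Walk i j), p.length ≤ k → reachB bb k i j = true := by
  intro k
  induction k with
  | zero =>
    intro i j p hp
    have : i = j := by
      cases p with
      | nil => rfl
      | cons h q => simp at hp
    subst this
    simp [reachB]
  | succ k ih =>
    intro i j p hp
    cases p with
    | nil =>
      have h1 : reachB bb k i i = true := ih (.nil) (by simp)
      rw [reachB, h1, Bool.true_or]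
    | cons h q =>
      rw [reachB]
      refine Bool.or_eq_true _ _ |>.mpr (Or.inr ?_)
      refine decide_eq_true ?_
      exact ⟨_, (hbb _ _).mpr h, ih q (by simpa using Nat.succ_le_succ_iff.mp (by simpa using hp))⟩

lemma degB_eq_degree {n : ℕ} (G : SimpleGraph (Fin n)) [DecidableRel G.Adj] (i : Fin n) :
    degB (fun i j => decide (G.Adj i j)) i = G.degree i := by
  rw [SimpleGraph.degree, SimpleGraph.neighborFinset_eq_filter, Finset.card_filter]
  unfold degB
  exact Finset.sum_congr rfl fun j _ => by by_cases h : G.Adj i j <;> simp [h]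

lemma degsum_eq {n : ℕ} (G : SimpleGraph (Fin n)) [DecidableRel G.Adj]
    (hT : G.IsTree) : degsumB (fun i j => decide (G.Adj i j)) = 2 * (n - 1) := by
  unfold degsumB
  rw [Finset.sum_congr rfl fun i _ => degB_eq_degree G i,
    G.sum_degrees_eq_twice_card_edges]
  have h := hT.card_edgeFinset
  rw [Fintype.card_fin] at h
  have hn : 1 ≤ n := by
    have := hT.isConnected.nonempty
    have : 0 < n := Fin.pos_iff_nonempty.mpr this
    omega
  omega
lemma nd_of_domB {n : ℕ} (G : SimpleGraph (Fin n)) [DecidableRel G.Adj]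
    (w : Fin n → ℤ) (hw : ∀ i, w i ≤ -2)
    (bb : Fin n → Fin n → Bool) (hbb : ∀ i j, bb i j = true ↔ G.Adj i j)
    (hdom : domB bb) :
    ∀ x : Fin n → ℝ, x ≠ 0 →
      x ⬝ᵥ (Matrix.mulVec
        (fun i j : Fin n => if i = j then (w i : ℝ) else if G.Adj i j then 1 else 0) x) < 0 := by
  intro x hx
  refine quad_neg G w (fun i => ((ddB bb i : ℤ) : ℝ))
    (fun i => by show (0:ℝ) < ((ddB bb i : ℤ) : ℝ); exact_mod_cast ddB_pos bb i) (fun i => ?_) x hx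
  have h1 : (-2 : ℤ) * ddB bb i + ∑ j, (if bb i j then ddB bb j else 0) < 0 := hdom i
  have h2 : ∑ j, (if G.Adj i j then ((ddB bb j : ℤ) : ℝ) else 0)
      = ((∑ j, if bb i j then ddB bb j else 0 : ℤ) : ℝ) := by
    push_cast
    refine Finset.sum_congr rfl fun j _ => ?_
    by_cases h : G.Adj i j
    · rw [if_pos h, if_pos ((hbb i j).mpr h)]
    · rw [if_neg h, if_neg (fun hc => h ((hbb i j).mp hc))]
  have h3 : (w i : ℝ) * ((ddB bb i : ℤ) : ℝ) ≤ (-2 : ℝ) * ((ddB bb i : ℤ) : ℝ) := by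
    refine mul_le_mul_of_nonneg_right ?_ ?_
    · exact_mod_cast hw i
    · exact_mod_cast (ddB_pos bb i).le
  have h4 : (-2 : ℝ) * ((ddB bb i : ℤ) : ℝ) + ∑ j, (if G.Adj i j then ((ddB bb j : ℤ) : ℝ) else 0) < 0 := by
    rw [h2]
    exact_mod_cast h1
  linarith

lemma bool_eq_of_iff {a b : Bool} (h : a = true ↔ b = true) : a = b := by
  cases a <;> cases b <;> simp_all

lemma sum_ite_ne {n : ℕ} (g : Fin n → ℝ) (c : Fin n) :
    ∑ j, (if j = c then (0:ℝ) else g j) = (∑ j, g j) - g c := by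
  have h : ∀ j, (if j = c then (0:ℝ) else g j) = g j - (if j = c then g j else 0) := by
    intro j; split_ifs <;> simp
  rw [Finset.sum_congr rfl fun j _ => h j, Finset.sum_sub_distrib,
    Finset.sum_ite_eq' univ c g, if_pos (mem_univ c)]

lemma sum_ite_const_sub {n : ℕ} (a : Fin n) (u v : ℝ) :
    ∑ j : Fin n, (if j = a then u else v) = n * v + (u - v) := by
  have h : ∀ j, (if j = a then u else v) = v + (if j = a then u - v else 0) := by
    intro j; split_ifs <;> ring
  rw [Finset.sum_congr rfl fun j _ => h j, Finset.sum_add_distrib,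
    Finset.sum_ite_eq' univ a (fun _ => u - v), if_pos (mem_univ a),
    Finset.sum_const, Finset.card_univ, Fintype.card_fin, nsmul_eq_mul]

lemma key1 : ∀ b : Fin 1 → Fin 1 → Bool, (∀ i, b i i = false) → domB b := by decide

lemma key2 : ∀ b : Fin 2 → Fin 2 → Bool, (∀ i, b i i = false) →
    (∀ i j, b i j = b j i) → degsumB b = 2 →
    (∀ j, reachB b 1 0 j = true) → domB b := by decide

set_option maxRecDepth 10000 in
lemma key3 : ∀ b : Fin 3 → Fin 3 → Bool, (∀ i, b i i = false) →
    (∀ i j, b i j = b j i) → degsumB b = 4 →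
    (∀ j, reachB b 2 0 j = true) → domB b := by decide

def pr4 : Fin 6 → Fin 4 × Fin 4 := ![(0,1),(0,2),(0,3),(1,2),(1,3),(2,3)]

def pidx4 (i j : Fin 4) : Fin 6 :=
  match i.val, j.val with
  | 0,1 => 0 | 1,0 => 0 | 0,2 => 1 | 2,0 => 1 | 0,3 => 2 | 3,0 => 2
  | 1,2 => 3 | 2,1 => 3 | 1,3 => 4 | 3,1 => 4 | 2,3 => 5 | 3,2 => 5
  | _,_ => 0

def adjOf4 (b : Fin 6 → Bool) (i j : Fin 4) : Bool := if i = j then false else b (pidx4 i j)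

lemma pr4_pidx4 : ∀ i j : Fin 4, i ≠ j →
    pr4 (pidx4 i j) = (i,j) ∨ pr4 (pidx4 i j) = (j,i) := by decide

set_option maxRecDepth 100000 in
lemma key4 : ∀ b : Fin 6 → Bool, degsumB (adjOf4 b) = 6 →
    (∀ j, reachB (adjOf4 b) 3 0 j = true) → domB (adjOf4 b) := by decide

def pr5 : Fin 10 → Fin 5 × Fin 5 :=
  ![(0,1),(0,2),(0,3),(0,4),(1,2),(1,3),(1,4),(2,3),(2,4),(3,4)]

def pidx5 (i j : Fin 5) : Fin 10 :=
  match i.val, j.val with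
  | 0,1 => 0 | 1,0 => 0 | 0,2 => 1 | 2,0 => 1 | 0,3 => 2 | 3,0 => 2 | 0,4 => 3 | 4,0 => 3
  | 1,2 => 4 | 2,1 => 4 | 1,3 => 5 | 3,1 => 5 | 1,4 => 6 | 4,1 => 6
  | 2,3 => 7 | 3,2 => 7 | 2,4 => 8 | 4,2 => 8 | 3,4 => 9 | 4,3 => 9
  | _,_ => 0

def adjOf5 (b : Fin 10 → Bool) (i j : Fin 5) : Bool := if i = j then false else b (pidx5 i j)

lemma pr5_pidx5 : ∀ i j : Fin 5, i ≠ j →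
    pr5 (pidx5 i j) = (i,j) ∨ pr5 (pidx5 i j) = (j,i) := by decide

abbrev starB (b : Fin 10 → Bool) : Prop :=
  ∃ c : Fin 5, (∀ v, v ≠ c → adjOf5 b c v = true) ∧
    (∀ u v, u ≠ c → v ≠ c → adjOf5 b u v = false)

set_option maxRecDepth 1000000 in
set_option maxHeartbeats 8000000 in
lemma key5 : ∀ (x : Bool) (b : Fin 9 → Bool), (degsumB (adjOf5 (Fin.cases x b)) = 8 ∧
    (∀ j, reachB (adjOf5 (Fin.cases x b)) 4 0 j = true)) →
    (starB (Fin.cases x b) ∨ domB (adjOf5 (Fin.cases x b))) := by decide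

theorem small_tree_negDef_or_I0star (n : ℕ) (hn1 : 1 ≤ n) (hn5 : n ≤ 5)
    (G : SimpleGraph (Fin n)) [DecidableRel G.Adj]
    (hT : G.IsTree) (w : Fin n → ℤ) (hw : ∀ i, w i ≤ -2)
    (hnotND : ¬ ∀ x : Fin n → ℝ, x ≠ 0 →
      x ⬝ᵥ (Matrix.mulVec
        (fun i j : Fin n => if i = j then (w i : ℝ) else if G.Adj i j then 1 else 0) x) < 0) :
    n = 5 ∧ (∃ c : Fin n, ∀ v : Fin n, v ≠ c → G.Adj c v) ∧ (∀ i, w i = -2) := by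
  classical
  interval_cases n
  · exfalso
    exact hnotND (nd_of_domB G w hw (fun i j => decide (G.Adj i j)) (fun i j => by simp)
      (key1 _ (fun i => by simp)))
  · exfalso
    refine hnotND (nd_of_domB G w hw (fun i j => decide (G.Adj i j)) (fun i j => by simp) (key2 _ (fun i => by simp)
      (fun i j => decide_eq_decide.mpr (G.adj_comm i j)) (degsum_eq G hT) fun j => ?_))
    obtain ⟨p⟩ := hT.isConnected.preconnected 0 j
    refine walk_reach (fun i j => by simp) 1 p.toPath.1 ?_
    have := p.toPath.2.length_lt
    simp [Fintype.card_fin] at this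
    omega
  · exfalso
    refine hnotND (nd_of_domB G w hw (fun i j => decide (G.Adj i j)) (fun i j => by simp) (key3 _ (fun i => by simp)
      (fun i j => decide_eq_decide.mpr (G.adj_comm i j)) (degsum_eq G hT) fun j => ?_))
    obtain ⟨p⟩ := hT.isConnected.preconnected 0 j
    refine walk_reach (fun i j => by simp) 2 p.toPath.1 ?_
    have := p.toPath.2.length_lt
    simp [Fintype.card_fin] at this
    omega
  · exfalso
    set bb4 : Fin 6 → Bool := fun k => decide (G.Adj (pr4 k).1 (pr4 k).2) with hbb4
    have hcomp : ∀ i j, adjOf4 bb4 i j = true ↔ G.Adj i j := by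
      intro i j
      unfold adjOf4
      by_cases h : i = j
      · subst h
        simp [G.irrefl]
      · rw [if_neg h]
        rcases pr4_pidx4 i j h with hc | hc
        · simp only [hbb4, hc, decide_eq_true_eq]
        · simp only [hbb4, hc, decide_eq_true_eq]
          exact G.adj_comm j i
    have heq : adjOf4 bb4 = fun i j => decide (G.Adj i j) := by
      funext i j
      exact bool_eq_of_iff (by simp [hcomp i j])
    refine hnotND (nd_of_domB G w hw _ hcomp (key4 bb4 ?_ fun j => ?_))
    · rw [heq]; exact degsum_eq G hT
    · obtain ⟨p⟩ := hT.isConnected.preconnected 0 j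
      refine walk_reach hcomp 3 p.toPath.1 ?_
      have := p.toPath.2.length_lt
      simp [Fintype.card_fin] at this
      omega
  · set bb5 : Fin 10 → Bool := fun k => decide (G.Adj (pr5 k).1 (pr5 k).2) with hbb5
    have hcomp : ∀ i j, adjOf5 bb5 i j = true ↔ G.Adj i j := by
      intro i j
      unfold adjOf5
      by_cases h : i = j
      · subst h
        simp [G.irrefl]
      · rw [if_neg h]
        rcases pr5_pidx5 i j h with hc | hc
        · simp only [hbb5, hc, decide_eq_true_eq]
        · simp only [hbb5, hc, decide_eq_true_eq]
          exact G.adj_comm j i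
    have heq : adjOf5 bb5 = fun i j => decide (G.Adj i j) := by
      funext i j
      exact bool_eq_of_iff (by simp [hcomp i j])
    have hglue : (Fin.cases (bb5 0) (fun k => bb5 k.succ) : Fin 10 → Bool) = bb5 := by
      funext k
      induction k using Fin.cases <;> rfl
    have hkey := key5 (bb5 0) (fun k => bb5 k.succ)
    rw [hglue] at hkey
    have hkey2 := hkey ⟨by rw [heq]; exact degsum_eq G hT, fun j => by
      obtain ⟨p⟩ := hT.isConnected.preconnected 0 j
      refine walk_reach hcomp 4 p.toPath.1 ?_
      have := p.toPath.2.length_lt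
      simp [Fintype.card_fin] at this
      omega⟩
    rcases hkey2 with hstar | hdom
    · obtain ⟨c, hs1, hs2⟩ := hstar
      have hAdjc : ∀ v, v ≠ c → G.Adj c v := fun v hv => (hcomp c v).mp (hs1 v hv)
      by_cases hall : ∀ i, w i = -2
      · exact ⟨rfl, ⟨c, hAdjc⟩, hall⟩
      · exfalso
        push_neg at hall
        obtain ⟨j0, hj0⟩ := hall
        have hj3 : w j0 ≤ -3 := by have := hw j0; omega
        have hNon : ∀ u v, u ≠ c → v ≠ c → ¬ G.Adj u v := by
          intro u v hu hv h
          have h2 := (hcomp u v).mpr h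
          rw [hs2 u v hu hv] at h2
          exact Bool.false_ne_true h2
        have hleafadj : ∀ v j : Fin 5, v ≠ c → (G.Adj v j ↔ j = c) := by
          intro v j hv
          constructor
          · intro h; by_contra hc; exact hNon v j hv hc h
          · intro h; rw [h]; exact (G.adj_comm c v).mp (hAdjc v hv)
        have hcadj : ∀ j, (G.Adj c j ↔ j ≠ c) := by
          intro j
          constructor
          · intro h hc; subst hc; exact G.irrefl h
          · intro h; exact hAdjc j h
        apply hnotND
        intro x hx
        by_cases hc0 : j0 = c
        · -- heavy center
          subst hc0
          refine quad_neg G w (fun v => if v = j0 then (3:ℝ) else 2)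
            (fun v => by split_ifs <;> norm_num) (fun i => ?_) x hx
          by_cases hic : i = j0
          · subst hic
            have h1 : ∀ j, (if G.Adj i j then (if j = i then (3:ℝ) else 2) else 0)
                = (if j = i then 0 else 2) := by
              intro j
              by_cases hj : j = i
              · subst hj; simp [G.irrefl]
              · rw [if_pos ((hcadj j).mpr hj), if_neg hj, if_neg hj]
            rw [Finset.sum_congr rfl fun j _ => h1 j, sum_ite_ne (fun _ => (2:ℝ)) i]
            have hwc : (w i : ℝ) ≤ -3 := by exact_mod_cast hj3
            simp only [if_pos rfl, Finset.sum_const, Finset.card_univ, Fintype.card_fin,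
              nsmul_eq_mul]
            norm_num
            nlinarith [hwc]
          · have h1 : ∀ j, (if G.Adj i j then (if j = j0 then (3:ℝ) else 2) else 0)
                = (if j = j0 then 3 else 0) := by
              intro j
              by_cases hj : j = j0
              · subst hj; rw [if_pos ((hleafadj i j hic).mpr rfl), if_pos rfl, if_pos rfl]
              · rw [if_neg (fun h => hj ((hleafadj i j hic).mp h)), if_neg hj]
            rw [Finset.sum_congr rfl fun j _ => h1 j,
              Finset.sum_ite_eq' univ j0 (fun _ => (3:ℝ)), if_pos (mem_univ j0), if_neg hic]
            have hwi : (w i : ℝ) ≤ -2 := by exact_mod_cast hw i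
            nlinarith [hwi]
        · -- heavy leaf
          refine quad_neg G w (fun v => if v = c then (40:ℝ) else if v = j0 then 14 else 21)
            (fun v => by split_ifs <;> norm_num) (fun i => ?_) x hx
          by_cases hic : i = c
          · subst hic
            have h1 : ∀ j, (if G.Adj i j then
                  (if j = i then (40:ℝ) else if j = j0 then 14 else 21) else 0)
                = (if j = i then 0 else if j = j0 then 14 else 21) := by
              intro j
              by_cases hj : j = i
              · subst hj; simp [G.irrefl]
              · rw [if_pos ((hcadj j).mpr hj), if_neg hj, if_neg hj]
            rw [Finset.sum_congr rfl fun j _ => h1 j,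
              sum_ite_ne (fun j => if j = j0 then (14:ℝ) else 21) i]
            rw [if_pos rfl, sum_ite_const_sub j0 (14:ℝ) 21,
              if_neg (show ¬(i = j0) from fun h => hc0 h.symm)]
            have hwi : (w i : ℝ) ≤ -2 := by exact_mod_cast hw i
            norm_num
            nlinarith [hwi]
          · have h1 : ∀ j, (if G.Adj i j then
                  (if j = c then (40:ℝ) else if j = j0 then 14 else 21) else 0)
                = (if j = c then 40 else 0) := by
              intro j
              by_cases hj : j = c
              · subst hj; rw [if_pos ((hleafadj i j hic).mpr rfl), if_pos rfl, if_pos rfl]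
              · rw [if_neg (fun h => hj ((hleafadj i j hic).mp h)), if_neg hj]
            rw [Finset.sum_congr rfl fun j _ => h1 j,
              Finset.sum_ite_eq' univ c (fun _ => (40:ℝ)), if_pos (mem_univ c), if_neg hic]
            by_cases hij : i = j0
            · subst hij
              have hwi : (w i : ℝ) ≤ -3 := by exact_mod_cast hj3
              rw [if_pos rfl]
              nlinarith [hwi]
            · have hwi : (w i : ℝ) ≤ -2 := by exact_mod_cast hw i
              rw [if_neg hij]
              nlinarith [hwi]
    · exact absurd (nd_of_domB G w hw _ hcomp hdom) hnotND
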